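/- Let P = {x ∈ ℝⁿ : −(1/2) p_jᵀ t_j ≤ p_jᵀ x ≤ (1/2) p_jᵀ t_j for all j = 1,…,m} and suppose there exist positive scalars γ_j and a symmetric positive definite matrix Q with γ_j p_j = Q t_j for all j. Then P = {x ∈ ℝⁿ : xᵀQx ≤ (x − t)ᵀQ(x − t) for all t ∈ {±t_1,…,±t_m}}, i.e. P is the Voronoi polytope of the vectors ±t_j with respect to the quadratic form f(x) = xᵀQx. -/

import Mathlib

open Matrix

theorem stmt_2 {n m : ℕ} (Q : Matrix (Fin n) (Fin n) ℝ) (hQ : Q.PosDef)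
    (p t : Fin m → Fin n → ℝ) (γ : Fin m → ℝ) (hγ : ∀ j, 0 < γ j)
    (hpt : ∀ j, γ j • p j = Q.mulVec (t j)) :
    {x : Fin n → ℝ | ∀ j,
        -(1 / 2) * (p j ⬝ᵥ t j) ≤ p j ⬝ᵥ x ∧ p j ⬝ᵥ x ≤ (1 / 2) * (p j ⬝ᵥ t j)} =
      {x : Fin n → ℝ | ∀ s ∈ ({v | ∃ j, v = t j ∨ v = -t j} : Set (Fin n → ℝ)),
        x ⬝ᵥ Q.mulVec x ≤ (x - s) ⬝ᵥ Q.mulVec (x - s)} := by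
  have hQt : Qᵀ = Q := by simpa [Matrix.IsSymm] using hQ.1
  have hsym : ∀ x y : Fin n → ℝ, x ⬝ᵥ Q.mulVec y = y ⬝ᵥ Q.mulVec x := by
    intro x y
    rw [dotProduct_mulVec, ← mulVec_transpose, hQt, dotProduct_comm]
  have key : ∀ (x s : Fin n → ℝ),
      (x ⬝ᵥ Q.mulVec x ≤ (x - s) ⬝ᵥ Q.mulVec (x - s)) ↔
        2 * (x ⬝ᵥ Q.mulVec s) ≤ s ⬝ᵥ Q.mulVec s := by
    intro x s
    have h := hsym x s
    rw [mulVec_sub, sub_dotProduct, dotProduct_sub, dotProduct_sub]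
    constructor <;> intro <;> linarith
  have hA : ∀ j (x : Fin n → ℝ), x ⬝ᵥ Q.mulVec (t j) = γ j * (p j ⬝ᵥ x) := by
    intro j x
    rw [← hpt j, dotProduct_smul, dotProduct_comm]
    simp [smul_eq_mul]
  ext x
  simp only [Set.mem_setOf_eq]
  constructor
  · rintro hx s ⟨j, rfl | rfl⟩
    · rw [key, hA, hA]
      have := (hx j).2
      have hg := hγ j
      nlinarith
    · have hkey := key x (-(t j))
      rw [hkey]
      simp only [mulVec_neg, dotProduct_neg, neg_dotProduct, neg_neg]
      rw [hA, hA]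
      have := (hx j).1
      have hg := hγ j
      nlinarith
  · intro hx j
    have h1 := hx (t j) ⟨j, Or.inl rfl⟩
    have h2 := hx (-t j) ⟨j, Or.inr rfl⟩
    rw [key, hA, hA] at h1
    rw [key] at h2
    simp only [mulVec_neg, dotProduct_neg, neg_dotProduct, neg_neg] at h2
    rw [hA, hA] at h2
    have hg := hγ j
    constructor <;> nlinarith
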